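/- Let a > 0 and set v₁ = (a, 0) and v₂ = (a/2, (√3/2)·a) in the Euclidean plane. For every point x of the plane there exist integers m, n such that dist x (m·v₁ + n·v₂) ≤ a / √3. -/

import Mathlib

lemma tri_key (u v : ℝ) (hu : 0 ≤ u) (hv : 0 ≤ v) (huv : u + v ≤ 1) :
    u^2 + u*v + v^2 ≤ 1/3 ∨ (u-1)^2 + (u-1)*v + v^2 ≤ 1/3 ∨
      u^2 + u*(v-1) + (v-1)^2 ≤ 1/3 := by
  rcases le_or_gt (2*u+v) 1 with h1 | h1
  · rcases le_or_gt (u+2*v) 1 with h2 | h2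
    · left; nlinarith [sq_nonneg (u-v), mul_nonneg hu hv]
    · right; right; nlinarith [sq_nonneg (u-v), mul_nonneg hu hv, sq_nonneg (u+v-1)]
  · rcases le_or_gt v u with h2 | h2
    · right; left; nlinarith [sq_nonneg (u-v), mul_nonneg hu hv, sq_nonneg (u+v-1)]
    · right; right; nlinarith [sq_nonneg (u-v), mul_nonneg hu hv, sq_nonneg (u+v-1)]

lemma tri_dist (a u v : ℝ) (ha : 0 < a) (h : u^2 + u*v + v^2 ≤ 1/3) :
    Real.sqrt ((u*a + v*(a/2))^2 + (v*(Real.sqrt 3/2*a))^2) ≤ a / Real.sqrt 3 := by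
  have h3 : Real.sqrt 3 ^ 2 = 3 := Real.sq_sqrt (by norm_num)
  have key : (u*a + v*(a/2))^2 + (v*(Real.sqrt 3/2*a))^2 = (u^2+u*v+v^2) * a^2 := by
    linear_combination (v^2*a^2/4) * h3
  rw [key, show a / Real.sqrt 3 = Real.sqrt ((1/3) * a^2) by
    rw [Real.sqrt_mul (by norm_num), Real.sqrt_sq ha.le]
    rw [show (1:ℝ)/3 = 3⁻¹ by norm_num, Real.sqrt_inv]
    rw [div_eq_mul_inv, mul_comm]]
  exact Real.sqrt_le_sqrt (by nlinarith [sq_nonneg a])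

/-- The covering radius of the equilateral-triangular lattice of side `a` is at
most `a / √3`: every point of the Euclidean plane is within `a / √3` of some
lattice point `m·v₁ + n·v₂` where `v₁ = (a, 0)`, `v₂ = (a/2, (√3/2)a)`. -/
theorem triangular_lattice_covers (a : ℝ) (ha : 0 < a)
    (x : EuclideanSpace ℝ (Fin 2)) :
    ∃ m n : ℤ,
      dist x (m • (!₂[a, 0] : EuclideanSpace ℝ (Fin 2)) +
              n • (!₂[a / 2, Real.sqrt 3 / 2 * a] : EuclideanSpace ℝ (Fin 2)))
        ≤ a / Real.sqrt 3 := by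
  have h3 : (0:ℝ) < Real.sqrt 3 := Real.sqrt_pos.2 (by norm_num)
  set t : ℝ := x 1 / (Real.sqrt 3 / 2 * a) with ht
  set s : ℝ := x 0 / a - t / 2 with hs
  have hx0 : x 0 = s * a + t * (a / 2) := by rw [hs]; field_simp; ring
  have hx1 : x 1 = t * (Real.sqrt 3 / 2 * a) := by
    rw [ht]; field_simp
  set u : ℝ := s - ⌊s⌋ with hu
  set v : ℝ := t - ⌊t⌋ with hv
  have hu0 : 0 ≤ u := by rw [hu]; linarith [Int.floor_le s]
  have hu1 : u < 1 := by rw [hu]; linarith [Int.lt_floor_add_one s]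
  have hv0 : 0 ≤ v := by rw [hv]; linarith [Int.floor_le t]
  have hv1 : v < 1 := by rw [hv]; linarith [Int.lt_floor_add_one t]
  -- the main computation: for any integers m n, the distance formula
  have dist_eq : ∀ m n : ℤ,
      dist x (m • (!₂[a, 0] : EuclideanSpace ℝ (Fin 2)) +
              n • (!₂[a / 2, Real.sqrt 3 / 2 * a] : EuclideanSpace ℝ (Fin 2)))
      = Real.sqrt (((s - m)*a + (t - n)*(a/2))^2 + ((t - n)*(Real.sqrt 3/2*a))^2) := by
    intro m n
    rw [EuclideanSpace.dist_eq]
    have e0 : (m • (!₂[a, 0] : EuclideanSpace ℝ (Fin 2)) +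
        n • (!₂[a / 2, Real.sqrt 3 / 2 * a] : EuclideanSpace ℝ (Fin 2))) 0
        = m * a + n * (a/2) := by
      simp [PiLp.add_apply, PiLp.smul_apply]
    have e1 : (m • (!₂[a, 0] : EuclideanSpace ℝ (Fin 2)) +
        n • (!₂[a / 2, Real.sqrt 3 / 2 * a] : EuclideanSpace ℝ (Fin 2))) 1
        = n * (Real.sqrt 3/2*a) := by
      simp [PiLp.add_apply, PiLp.smul_apply]
    simp only [Fin.sum_univ_two, Real.dist_eq, e0, e1, sq_abs]
    rw [hx0, hx1]
    congr 1
    ring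
  have main : ∀ u' v' : ℝ, u'^2 + u'*v' + v'^2 ≤ 1/3 →
      ∀ m n : ℤ, (s - m = u') → (t - n = v') →
      ∃ m' n' : ℤ,
        dist x (m' • (!₂[a, 0] : EuclideanSpace ℝ (Fin 2)) +
              n' • (!₂[a / 2, Real.sqrt 3 / 2 * a] : EuclideanSpace ℝ (Fin 2)))
        ≤ a / Real.sqrt 3 := by
    intro u' v' hle m n hm hn
    exact ⟨m, n, by rw [dist_eq m n, hm, hn]; exact tri_dist a u' v' ha hle⟩
  rcases le_or_gt (u + v) 1 with hcase | hcase
  · rcases tri_key u v hu0 hv0 hcase with h | h | h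
    · exact main u v h ⌊s⌋ ⌊t⌋ (by rw [hu]) (by rw [hv])
    · exact main (u-1) v h (⌊s⌋+1) ⌊t⌋ (by push_cast; rw [hu]; ring) (by rw [hv])
    · exact main u (v-1) h ⌊s⌋ (⌊t⌋+1) (by rw [hu]) (by push_cast; rw [hv]; ring)
  · have := tri_key (1-u) (1-v) (by linarith) (by linarith) (by linarith)
    rcases this with h | h | h
    · exact main (u-1) (v-1) (by nlinarith) (⌊s⌋+1) (⌊t⌋+1)
        (by push_cast; rw [hu]; ring) (by push_cast; rw [hv]; ring)
    · exact main u (v-1) (by nlinarith) ⌊s⌋ (⌊t⌋+1)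
        (by rw [hu]) (by push_cast; rw [hv]; ring)
    · exact main (u-1) v (by nlinarith) (⌊s⌋+1) ⌊t⌋
        (by push_cast; rw [hu]; ring) (by rw [hv])
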